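/- Let Q_{i−1}, Q_i, Q_{i+1}, Q̃_i be polynomials over a field containing invertible elements ζ̃_i, ζ̃_{i+1} with ζ̃_i ≠ ζ̃_{i+1}, and an invertible element h = ħ^{1/2}. Denote by P^{(m)}(u) = P(h^{-m} u) the shifted polynomial. Suppose the QQ̃-relation ζ̃_{i+1} Q_i^{(1)} Q̃_i^{(−1)} − ζ̃_i Q_i^{(−1)} Q̃_i^{(1)} = (ζ̃_{i+1} − ζ̃_i) Q_{i−1} Q_{i+1} holds. Then at every root σ of Q_i with Q_i^{(2)}(σ) ≠ 0, Q_i^{(−2)}(σ) ≠ 0, Q_{i−1}^{(±1)}(σ) ≠ 0, Q_{i+1}^{(−1)}(σ) ≠ 0, Q̃_i(σ) ≠ 0, the Bethe-type relation (ζ̃_i/ζ̃_{i+1}) · (Q_{i−1}^{(1)}(σ) Q_i^{(−2)}(σ) Q_{i+1}^{(1)}(σ)) / (Q_{i−1}^{(−1)}(σ) Q_i^{(2)}(σ) Q_{i+1}^{(−1)}(σ)) = −1 holds. -/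
import Mathlib


/-- The QQ̃-relation implies the Bethe-type relation at roots of Q_i.
Here `h` plays ħ^{1/2}, `z1` plays ζ̃_i, `z2` plays ζ̃_{i+1}, `Qm` is Q_{i−1},
`Qi` is Q_i, `Qp` is Q_{i+1}, `Qt` is Q̃_i; the shift is P^{(m)}(u) = P(h^{−m}u). -/
theorem stmt7 {K : Type*} [Field K] (h : K) (hh : h ≠ 0)
    (z1 z2 : K) (hz1 : z1 ≠ 0) (hz2 : z2 ≠ 0) (hz : z1 ≠ z2)
    (Qm Qi Qp Qt : Polynomial K)
    (hQQ : ∀ u : K,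
        z2 * Qi.eval (h⁻¹ * u) * Qt.eval (h * u)
      - z1 * Qi.eval (h * u) * Qt.eval (h⁻¹ * u)
      = (z2 - z1) * Qm.eval u * Qp.eval u)
    (σ : K) (hσ : Qi.eval σ = 0)
    (h2 : Qi.eval ((h⁻¹) ^ 2 * σ) ≠ 0)
    (hm2 : Qi.eval (h ^ 2 * σ) ≠ 0)
    (hmp : Qm.eval (h⁻¹ * σ) ≠ 0)
    (hmm : Qm.eval (h * σ) ≠ 0)
    (hpm : Qp.eval (h * σ) ≠ 0)
    (hQt : Qt.eval σ ≠ 0) :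
    (z1 / z2) *
      ((Qm.eval (h⁻¹ * σ) * Qi.eval (h ^ 2 * σ) * Qp.eval (h⁻¹ * σ)) /
        (Qm.eval (h * σ) * Qi.eval ((h⁻¹) ^ 2 * σ) * Qp.eval (h * σ)))
    = -1 := by
  have A := hQQ (h⁻¹ * σ)
  have B := hQQ (h * σ)
  rw [show h * (h⁻¹ * σ) = σ by field_simp, show h⁻¹ * (h⁻¹ * σ) = (h⁻¹) ^ 2 * σ by ring,
    hσ] at A
  rw [show h⁻¹ * (h * σ) = σ by field_simp, show h * (h * σ) = h ^ 2 * σ by ring, hσ] at B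
  set a := Qm.eval (h⁻¹ * σ)
  set b := Qm.eval (h * σ)
  set c := Qi.eval (h ^ 2 * σ)
  set d := Qi.eval ((h⁻¹) ^ 2 * σ)
  set e := Qp.eval (h⁻¹ * σ)
  set f := Qp.eval (h * σ)
  set t := Qt.eval σ
  have hz' : z2 - z1 ≠ 0 := sub_ne_zero.mpr (Ne.symm hz)
  have ht : (z2 - z1) * t ≠ 0 := mul_ne_zero hz' hQt
  have key : (z1 * (a * c * e)) * ((z2 - z1) * t) = (-(z2 * (b * d * f))) * ((z2 - z1) * t) := by
    linear_combination (-z1 * c * t) * A + (-z2 * d * t) * B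
  have main := mul_right_cancel₀ ht key
  field_simp
  linear_combination main
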